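/- arXiv:1709.01774 — 2 statements merged into one kernel-verified Lean document; each statement's English description precedes it below -/
import Mathlib

section
/- Let (X,𝓑,m) be a σ-finite positive measure space and a_1,…,a_N, b_1,…,b_N : X → ℂ be 𝓑-measurable functions; define f(λ,x) = (1 + ∑_{n=1}^N a_n(x)λⁿ)/(1 + ∑_{n=1}^N b_n(x)λⁿ). Then the set Λ_f = {λ ∈ ℂ : m({x ∈ X : f(λ,x) = 0}) > 0} is countable. -/
open MeasureTheory ENNReal

open Classical in
/-- If each point lies in at most `M` of the measurable sets `A c`, then only countably
many of the `A c` can have positive measure (w.r.t. a σ-finite measure). -/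
lemma countable_pos_of_bounded_multiplicity {X : Type*} [MeasurableSpace X]
    (m : Measure X) [SigmaFinite m] {ι : Type*} (A : ι → Set X)
    (hA : ∀ c, MeasurableSet (A c)) (M : ℕ)
    (hM : ∀ x : X, ∃ s : Finset ι, {c | x ∈ A c} ⊆ ↑s ∧ s.card ≤ M) :
    Set.Countable {c | 0 < m (A c)} := by
  -- key: for any finset F and measurable E, ∑_{c∈F} m (A c ∩ E) ≤ M * m E
  have key : ∀ (F : Finset ι) (E : Set X), MeasurableSet E →
      ∑ c ∈ F, m (A c ∩ E) ≤ (M : ℝ≥0∞) * m E := by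
    intro F E hE
    have h1 : ∀ c ∈ F, m (A c ∩ E)
        = ∫⁻ x, (A c ∩ E).indicator (fun _ => (1 : ℝ≥0∞)) x ∂m := by
      intro c _
      rw [lintegral_indicator_const ((hA c).inter hE)]
      simp
    calc ∑ c ∈ F, m (A c ∩ E)
        = ∑ c ∈ F, ∫⁻ x, (A c ∩ E).indicator (fun _ => (1 : ℝ≥0∞)) x ∂m :=
          Finset.sum_congr rfl h1
      _ = ∫⁻ x, ∑ c ∈ F, (A c ∩ E).indicator (fun _ => (1 : ℝ≥0∞)) x ∂m := by
          rw [lintegral_finset_sum]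
          intro c _
          exact measurable_const.indicator ((hA c).inter hE)
      _ ≤ ∫⁻ x, E.indicator (fun _ => (M : ℝ≥0∞)) x ∂m := by
          apply lintegral_mono
          intro x
          dsimp only
          by_cases hx : x ∈ E
          · have h2 : ∀ c ∈ F, (A c ∩ E).indicator (fun _ => (1 : ℝ≥0∞)) x
                = if x ∈ A c then 1 else 0 := by
              intro c _
              by_cases hc : x ∈ A c <;> simp [Set.indicator_apply, hc, hx]
            rw [Finset.sum_congr rfl h2, Finset.sum_boole,
              Set.indicator_of_mem hx]
            obtain ⟨s, hs, hsc⟩ := hM x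
            have : (F.filter fun c => x ∈ A c) ⊆ s := by
              intro c hc
              simp only [Finset.mem_filter] at hc
              exact hs hc.2
            exact_mod_cast le_trans (Nat.cast_le.mpr (le_trans
              (Finset.card_le_card this) hsc)) le_rfl
          · have h2 : ∀ c ∈ F, (A c ∩ E).indicator (fun _ => (1 : ℝ≥0∞)) x = 0 := by
              intro c _
              simp [Set.indicator_apply, hx]
            simp [Finset.sum_congr rfl h2, Set.indicator_of_notMem hx]
      _ = (M : ℝ≥0∞) * m E := lintegral_indicator_const hE _
  -- the countable cover
  have cover : {c | 0 < m (A c)} ⊆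
      ⋃ (n : ℕ) (k : ℕ), {c | ((k : ℝ≥0∞))⁻¹ < m (A c ∩ spanningSets m n)} := by
    intro c hc
    have hc' : 0 < m (A c) := hc
    have h0 : m (A c) ≠ 0 := hc'.ne'
    have : ∃ n, m (A c ∩ spanningSets m n) ≠ 0 := by
      by_contra h
      push_neg at h
      have : m (A c) = 0 := by
        have : A c = ⋃ n, A c ∩ spanningSets m n := by
          rw [← Set.inter_iUnion, iUnion_spanningSets, Set.inter_univ]
        rw [this]
        exact le_antisymm (le_trans (measure_iUnion_le _) (by simp [h])) zero_le
      exact h0 this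
    obtain ⟨n, hn⟩ := this
    obtain ⟨k, hk⟩ := ENNReal.exists_inv_nat_lt hn
    exact Set.mem_iUnion.mpr ⟨n, Set.mem_iUnion.mpr ⟨k, hk⟩⟩
  apply Set.Countable.mono cover
  apply Set.countable_iUnion; intro n
  apply Set.countable_iUnion; intro k
  -- each piece is finite
  apply Set.Finite.countable
  set E := spanningSets m n with hEdef
  have hEmeas : MeasurableSet E := measurableSet_spanningSets m n
  have hEfin : m E < ⊤ := measure_spanningSets_lt_top m n
  rcases Nat.eq_zero_or_pos k with hk | hk
  · have : {c | ((k : ℝ≥0∞))⁻¹ < m (A c ∩ E)} = ∅ := by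
      ext c
      simp [hk, not_top_lt]
    rw [this]; exact Set.finite_empty
  by_contra hinf
  rw [← Set.not_infinite, not_not] at hinf
  set L : ℝ≥0∞ := (M : ℝ≥0∞) * m E * k with hL
  have hLfin : L ≠ ⊤ := by
    simp only [hL]
    exact ENNReal.mul_ne_top (ENNReal.mul_ne_top (by simp) hEfin.ne) (by simp)
  obtain ⟨B, hB⟩ := ENNReal.exists_nat_gt hLfin
  obtain ⟨F, hFsub, hFcard⟩ := hinf.exists_subset_card_eq B
  have hsum : ∑ c ∈ F, m (A c ∩ E) ≤ (M : ℝ≥0∞) * m E := key F E hEmeas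
  have hlow : (F.card : ℝ≥0∞) * ((k : ℝ≥0∞))⁻¹ ≤ ∑ c ∈ F, m (A c ∩ E) := by
    calc (F.card : ℝ≥0∞) * ((k : ℝ≥0∞))⁻¹ = ∑ _c ∈ F, ((k : ℝ≥0∞))⁻¹ := by
          rw [Finset.sum_const, nsmul_eq_mul]
      _ ≤ ∑ c ∈ F, m (A c ∩ E) := by
          apply Finset.sum_le_sum
          intro c hc
          exact (hFsub hc).le
  have hkne : (k : ℝ≥0∞) ≠ 0 := by exact_mod_cast hk.ne'
  have hktop : (k : ℝ≥0∞) ≠ ⊤ := by simp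
  have h3 : (F.card : ℝ≥0∞) ≤ L := by
    have h4 : (F.card : ℝ≥0∞) * ((k : ℝ≥0∞))⁻¹ ≤ (M : ℝ≥0∞) * m E :=
      le_trans hlow hsum
    calc (F.card : ℝ≥0∞) = (F.card : ℝ≥0∞) * ((k : ℝ≥0∞))⁻¹ * k := by
          rw [mul_assoc, ENNReal.inv_mul_cancel hkne hktop, mul_one]
      _ ≤ (M : ℝ≥0∞) * m E * k := mul_le_mul_left h4 _
      _ = L := rfl
  rw [hFcard] at h3
  exact absurd (lt_of_le_of_lt h3 hB) (lt_irrefl _)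

/-- Let `(X, 𝓑, m)` be a σ-finite measure space and
`a_1, …, a_N, b_1, …, b_N : X → ℂ` measurable functions.  For
`f(c, x) = (1 + ∑_{n=1}^N a_n(x) cⁿ) / (1 + ∑_{n=1}^N b_n(x) cⁿ)`, the set
`Λ_f = {c ∈ ℂ : m {x : f(c,x) = 0} > 0}` is countable. -/
theorem countable_zero_measure_set
    {X : Type*} [MeasurableSpace X] (m : Measure X) [SigmaFinite m]
    (N : ℕ) (a b : Fin N → X → ℂ)
    (ha : ∀ i, Measurable (a i)) (hb : ∀ i, Measurable (b i)) :
    Set.Countable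
      {c : ℂ | 0 < m {x : X |
        (1 + ∑ i : Fin N, a i x * c ^ ((i : ℕ) + 1)) /
          (1 + ∑ i : Fin N, b i x * c ^ ((i : ℕ) + 1)) = 0}} := by
  set A : ℂ → Set X := fun c => {x : X |
        (1 + ∑ i : Fin N, a i x * c ^ ((i : ℕ) + 1)) /
          (1 + ∑ i : Fin N, b i x * c ^ ((i : ℕ) + 1)) = 0} with hAdef
  apply countable_pos_of_bounded_multiplicity m A ?_ (N + N)
  · -- bounded multiplicity via roots of the polynomial p x * q x
    intro x
    set p : Polynomial ℂ := 1 + ∑ i : Fin N, Polynomial.C (a i x) * Polynomial.X ^ ((i : ℕ) + 1) with hp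
    set q : Polynomial ℂ := 1 + ∑ i : Fin N, Polynomial.C (b i x) * Polynomial.X ^ ((i : ℕ) + 1) with hq
    have hpev : ∀ c : ℂ, p.eval c = 1 + ∑ i : Fin N, a i x * c ^ ((i : ℕ) + 1) := by
      intro c; simp [hp, Polynomial.eval_finset_sum]
    have hqev : ∀ c : ℂ, q.eval c = 1 + ∑ i : Fin N, b i x * c ^ ((i : ℕ) + 1) := by
      intro c; simp [hq, Polynomial.eval_finset_sum]
    have hp0 : p ≠ 0 := by
      intro h
      have := hpev 0
      rw [h] at this
      simp at this
    have hq0 : q ≠ 0 := by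
      intro h
      have := hqev 0
      rw [h] at this
      simp at this
    have hpq0 : p * q ≠ 0 := mul_ne_zero hp0 hq0
    refine ⟨(p * q).roots.toFinset, ?_, ?_⟩
    · intro c hc
      simp only [Set.mem_setOf_eq, hAdef] at hc
      rw [_root_.div_eq_zero_iff] at hc
      simp only [Multiset.mem_toFinset, Finset.coe_sort_coe, Multiset.mem_toFinset,
        Polynomial.mem_roots', Finset.mem_coe]
      refine ⟨hpq0, ?_⟩
      rcases hc with hc | hc
      · have h : p.eval c = 0 := by rw [hpev]; exact hc
        show (p * q).eval c = 0
        rw [Polynomial.eval_mul, h, zero_mul]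
      · have h : q.eval c = 0 := by rw [hqev]; exact hc
        show (p * q).eval c = 0
        rw [Polynomial.eval_mul, h, mul_zero]
    · have hdp : p.natDegree ≤ N := by
        apply le_trans (Polynomial.natDegree_add_le _ _)
        simp only [Polynomial.natDegree_one, max_le_iff]
        refine ⟨Nat.zero_le _, Polynomial.natDegree_sum_le_of_forall_le _ _ ?_⟩
        intro i _
        exact le_trans (Polynomial.natDegree_C_mul_X_pow_le _ _) i.2
      have hdq : q.natDegree ≤ N := by
        apply le_trans (Polynomial.natDegree_add_le _ _)
        simp only [Polynomial.natDegree_one, max_le_iff]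
        refine ⟨Nat.zero_le _, Polynomial.natDegree_sum_le_of_forall_le _ _ ?_⟩
        intro i _
        exact le_trans (Polynomial.natDegree_C_mul_X_pow_le _ _) i.2
      calc (p * q).roots.toFinset.card ≤ Multiset.card (p * q).roots :=
            Multiset.toFinset_card_le _
        _ ≤ (p * q).natDegree := Polynomial.card_roots' _
        _ ≤ p.natDegree + q.natDegree := Polynomial.natDegree_mul_le
        _ ≤ N + N := Nat.add_le_add hdp hdq
  · -- measurability
    intro c
    have h1 : Measurable fun x => 1 + ∑ i : Fin N, a i x * c ^ ((i : ℕ) + 1) :=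
      measurable_const.add (Finset.measurable_sum _ fun i _ => (ha i).mul_const _)
    have h2 : Measurable fun x => 1 + ∑ i : Fin N, b i x * c ^ ((i : ℕ) + 1) :=
      measurable_const.add (Finset.measurable_sum _ fun i _ => (hb i).mul_const _)
    exact (h1.div h2) (measurableSet_singleton 0)
end

section
/- Fix p ∈ 𝒩 and λ ∈ ℝ, and let E ∈ ℝ be such that the boundary value G^ω_{p,p}(E±i0) = lim_{ε↓0} G^ω_{p,p}(E±iε) exists. Let f : (0,∞) → ℂ satisfy lim_{ε↓0} f(ε) = 0 and suppose the limit T := lim_{ε↓0} f(ε) C_p G^{ω,λ}_{p,p,p}(E±iε) C_p exists. Then range(T) ⊆ ker(C_p^{-1} + λ G^ω_{p,p}(E±i0)) ⊆ ker(Im G^ω_{p,p}(E±i0)), where C_p^{-1} denotes the inverse of C_p on P_p𝓗. -/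
open Filter Topology
open scoped InnerProductSpace

noncomputable section

variable {H : Type*} [NormedAddCommGroup H] [InnerProductSpace ℂ H] [CompleteSpace H]

/-- The imaginary part `Im T = (T - T*) / (2i)` of a bounded operator. -/
def imPart (T : H →L[ℂ] H) : H →L[ℂ] H :=
  ((2 : ℂ) * Complex.I)⁻¹ • (T - ContinuousLinearMap.adjoint T)

lemma stmt17_isUnit (T : H →L[ℂ] H) (hT : IsSelfAdjoint T) (z : ℂ) (hz : z.im ≠ 0) :
    IsUnit (T - z • (1 : H →L[ℂ] H)) := by
  have hz' : z ∉ spectrum ℂ T := fun h => hz (by rw [hT.mem_spectrum_eq_re h]; simp)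
  have := spectrum.notMem_iff.mp hz'
  rw [Algebra.algebraMap_eq_smul_one] at this
  simpa using this.neg

lemma stmt17_resolvent {R : Type*} [Ring R] {a b : R} (ha : IsUnit a) (hb : IsUnit b) :
    Ring.inverse a - Ring.inverse b = Ring.inverse a * (b - a) * Ring.inverse b := by
  rw [mul_sub, sub_mul, mul_assoc, Ring.mul_inverse_cancel _ hb,
    Ring.inverse_mul_cancel _ ha, mul_one, one_mul]

lemma stmt17_core {A : Type*} [Ring A] [Module ℝ A] [SMulCommClass ℝ A A] [IsScalarTower ℝ A A]
    (Pp Cp Ci R1 R2 : A) (lam : ℝ)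
    (hPC : Pp * Cp = Cp) (hCP : Cp * Pp = Cp) (hCiC : Ci * Cp = Pp)
    (hres : R1 - R2 = R1 * (lam • Cp) * R2) :
    (Ci + lam • (Pp * (R1 * Pp))) * (Cp * ((Pp * (R2 * Pp)) * Cp)) = (Pp * (R1 * Pp)) * Cp := by
  have hPC' : ∀ x : A, Pp * (Cp * x) = Cp * x := fun x => by rw [← mul_assoc, hPC]
  have hCP' : ∀ x : A, Cp * (Pp * x) = Cp * x := fun x => by rw [← mul_assoc, hCP]
  have hCiC' : ∀ x : A, Ci * (Cp * x) = Pp * x := fun x => by rw [← mul_assoc, hCiC]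
  have hres' : Pp * (R1 * Cp) - Pp * (R2 * Cp) = lam • (Pp * (R1 * (Cp * (R2 * Cp)))) := by
    have h := congrArg (fun x => Pp * (x * Cp)) hres
    simpa only [sub_mul, mul_sub, smul_mul_assoc, mul_smul_comm, mul_assoc] using h
  simp only [add_mul, smul_mul_assoc, mul_smul_comm, mul_assoc, hPC', hCP', hCiC', hPC, hCP, hCiC]
  rw [← hres']
  abel

lemma stmt17_proj_comp (Pp Cp : H →L[ℂ] H) (hPidem : Pp ∘L Pp = Pp)
    (hrange : LinearMap.range ((Pp : H →ₗ[ℂ] H)) = LinearMap.range ((Cp : H →ₗ[ℂ] H))) :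
    Pp ∘L Cp = Cp := by
  ext x
  obtain ⟨y, hy⟩ : Cp x ∈ LinearMap.range ((Pp : H →ₗ[ℂ] H)) := by
    rw [hrange]; exact ⟨x, rfl⟩
  have h1 : Pp (Pp y) = Pp y := by
    have := congrArg (fun f : H →L[ℂ] H => f y) hPidem; simpa using this
  have hy' : Pp y = Cp x := hy
  simp only [ContinuousLinearMap.comp_apply]
  rw [← hy', h1]

lemma stmt17_pos_inner_zero {S : H →L[ℂ] H} (hS : IsSelfAdjoint S)
    (hpos : ∀ x : H, 0 ≤ (⟪x, S x⟫_ℂ).re) {φ : H} (h0 : (⟪φ, S φ⟫_ℂ).re = 0) :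
    S φ = 0 := by
  by_contra hne
  have hsym : ∀ x y : H, ⟪S x, y⟫_ℂ = ⟪x, S y⟫_ℂ := fun x y =>
    ((ContinuousLinearMap.isSelfAdjoint_iff_isSymmetric).mp hS) x y
  set ψ := S φ with hψ
  set N : ℝ := ‖ψ‖ ^ 2 with hN
  set c : ℝ := (⟪ψ, S ψ⟫_ℂ).re with hc
  have hc0 : 0 ≤ c := hpos ψ
  have hN0 : 0 < N := by
    have := norm_pos_iff.mpr hne
    positivity
  have key : ∀ t : ℝ, 0 ≤ 2 * t * N + t ^ 2 * c := by
    intro t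
    have h := hpos (φ + (t : ℂ) • ψ)
    have expand : ⟪φ + (t:ℂ)•ψ, S (φ + (t:ℂ)•ψ)⟫_ℂ
        = ⟪φ, S φ⟫_ℂ + (t:ℂ) * ⟪φ, S ψ⟫_ℂ + (t:ℂ) * ⟪ψ, S φ⟫_ℂ + (t:ℂ)^2 * ⟪ψ, S ψ⟫_ℂ := by
      simp only [map_add, map_smul, inner_add_left, inner_add_right, inner_smul_left,
        inner_smul_right, Complex.conj_ofReal]
      ring
    have h1 : ⟪ψ, S φ⟫_ℂ = (N : ℂ) := by
      rw [hN]; push_cast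
      exact inner_self_eq_norm_sq_to_K (𝕜 := ℂ) ψ
    have h2 : ⟪φ, S ψ⟫_ℂ = (N : ℂ) := by rw [← hsym]; rw [← hψ] at h1 ⊢; exact h1
    rw [expand, h1, h2] at h
    have hre : (⟪φ, S φ⟫_ℂ + (t:ℂ) * N + (t:ℂ) * N + (t:ℂ)^2 * ⟪ψ, S ψ⟫_ℂ).re
        = (⟪φ, S φ⟫_ℂ).re + t * N + t * N + t^2 * c := by
      simp [Complex.add_re, Complex.mul_re, hc, ← Complex.ofReal_pow, Complex.ofReal_re,
        Complex.ofReal_im]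
    rw [hre, h0] at h
    linarith
  set t : ℝ := -(N / (c + 1)) with ht
  have hc1 : (0:ℝ) < c + 1 := by linarith
  have h4 : (c+1)^2 * (2*t*N + t^2*c) = N^2 * c - 2*N^2*(c+1) := by
    rw [ht]; field_simp; ring
  have h5 := key t
  nlinarith [mul_pos hN0 hN0, sq_nonneg (c+1)]

lemma stmt17_imPart_isSelfAdjoint (L : H →L[ℂ] H) : IsSelfAdjoint (imPart L) := by
  unfold imPart
  rw [IsSelfAdjoint, star_smul, star_sub]
  simp only [ContinuousLinearMap.star_eq_adjoint, ContinuousLinearMap.adjoint_adjoint]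
  have h : star (((2:ℂ) * Complex.I)⁻¹) = -((2:ℂ) * Complex.I)⁻¹ := by
    simp [Complex.star_def, map_inv₀, Complex.conj_I]
  rw [h, neg_smul, ← smul_neg, neg_sub]

lemma stmt17_im_inner (T : H →L[ℂ] H) (hT : IsSelfAdjoint T) (z : ℂ) (hz : z.im ≠ 0)
    (ψ : H) :
    (⟪ψ, Ring.inverse (T - z • (1 : H →L[ℂ] H)) ψ⟫_ℂ).im
      = z.im * ‖Ring.inverse (T - z • (1 : H →L[ℂ] H)) ψ‖ ^ 2 := by
  have hunit : IsUnit (T - z • (1 : H →L[ℂ] H)) := stmt17_isUnit T hT z hz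
  set R := Ring.inverse (T - z • (1 : H →L[ℂ] H)) with hR
  set u := R ψ with hu
  have happ : (T - z • (1 : H →L[ℂ] H)) u = ψ := by
    have h := Ring.mul_inverse_cancel _ hunit
    have := congrArg (fun f : H →L[ℂ] H => f ψ) h
    simpa [ContinuousLinearMap.mul_apply] using this
  have hTsym : ⟪T u, u⟫_ℂ = ⟪u, T u⟫_ℂ :=
    ((ContinuousLinearMap.isSelfAdjoint_iff_isSymmetric).mp hT) u u
  have hTreal : (⟪T u, u⟫_ℂ).im = 0 := by
    have : (starRingEnd ℂ) ⟪T u, u⟫_ℂ = ⟪T u, u⟫_ℂ := by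
      rw [inner_conj_symm, hTsym]
    exact Complex.conj_eq_iff_im.mp this
  have expand : ⟪ψ, u⟫_ℂ = ⟪T u, u⟫_ℂ - (starRingEnd ℂ) z * ⟪u, u⟫_ℂ := by
    conv_lhs => rw [← happ]
    simp [inner_sub_left, inner_smul_left]
    ring
  have hinner : ⟪u, u⟫_ℂ = ((‖u‖ ^ 2 : ℝ) : ℂ) := by
    push_cast
    exact inner_self_eq_norm_sq_to_K (𝕜 := ℂ) u
  rw [expand, hinner]
  simp [Complex.sub_im, Complex.mul_im, hTreal, Complex.conj_im, Complex.conj_re,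
    Complex.ofReal_re, Complex.ofReal_im, ← Complex.ofReal_pow]

lemma stmt17_inner_imPart (L : H →L[ℂ] H) (x : H) :
    ⟪x, imPart L x⟫_ℂ = ((⟪x, L x⟫_ℂ).im : ℂ) := by
  unfold imPart
  rw [ContinuousLinearMap.smul_apply, inner_smul_right, ContinuousLinearMap.sub_apply,
    inner_sub_right, ContinuousLinearMap.adjoint_inner_right]
  have h1 : ⟪L x, x⟫_ℂ = (starRingEnd ℂ) ⟪x, L x⟫_ℂ := (inner_conj_symm (L x) x).symm
  rw [h1, Complex.sub_conj]
  have hI : ((2:ℂ) * Complex.I) ≠ 0 := by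
    simp [Complex.I_ne_zero]
  field_simp
  push_cast
  ring

lemma stmt17_real_smul (s : ℝ) (A : H →L[ℂ] H) : s • A = (s : ℂ) • A := by
  rw [← smul_one_smul ℂ s A, Complex.real_smul, mul_one]

lemma stmt17_real_smul_vec (s : ℝ) (v : H) : s • v = (s : ℂ) • v := by
  rw [← smul_one_smul ℂ s v, Complex.real_smul, mul_one]

/-- Fix `p`, `λ` and `E ∈ ℝ` such that `G^ω_{p,p}(E ± i0)` exists.
Let `f : (0,∞) → ℂ` with `f(ε) → 0` as `ε ↓ 0`, and suppose
`T₀ = lim_{ε↓0} f(ε) C_p G^{ω,λ}_{p,p,p}(E ± iε) C_p` exists.  Then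
`range T₀ ⊆ ker (C_p⁻¹ + λ G^ω_{p,p}(E ± i0)) ⊆ ker (Im G^ω_{p,p}(E ± i0))`,
where `C_p⁻¹` is the inverse of `C_p` on `P_p𝓗`.
(The sign `s = 1` gives the `+` case and `s = -1` the `-` case.) -/
theorem range_subset_ker_subset_ker_im
    -- `T = A^ω`, essentially self-adjoint; here its (bounded) self-adjoint realisation
    (T : H →L[ℂ] H) (hT : IsSelfAdjoint T)
    {ι : Type*} [Countable ι]
    (C : ι → H →L[ℂ] H) (hCpos : ∀ n, (C n).IsPositive)
    (hCfin : ∀ n, FiniteDimensional ℂ (LinearMap.range ((C n : H →ₗ[ℂ] H))))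
    (P : ι → H →L[ℂ] H)
    (hPsa : ∀ n, IsSelfAdjoint (P n)) (hPidem : ∀ n, (P n) ∘L (P n) = P n)
    (hPrange : ∀ n, LinearMap.range ((P n : H →ₗ[ℂ] H)) = LinearMap.range ((C n : H →ₗ[ℂ] H)))
    (p : ι) (lam : ℝ) (E : ℝ)
    -- the sign `±`
    (s : ℝ) (hs : s = 1 ∨ s = -1)
    -- `Cinv` is the inverse `C_p⁻¹` of `C_p` on `P_p𝓗`
    (Cinv : H →L[ℂ] H) (hCinv₁ : Cinv ∘L (C p) = P p) (hCinv₂ : (C p) ∘L Cinv = P p)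
    -- the boundary value `L = G^ω_{p,p}(E ± i0)` exists
    (L : H →L[ℂ] H)
    (hL : Tendsto (fun ε : ℝ =>
        (P p) ∘L Ring.inverse (T - ((E : ℂ) + (s * ε) • Complex.I) • (1 : H →L[ℂ] H)) ∘L (P p))
      (𝓝[>] 0) (𝓝 L))
    -- `f : (0,∞) → ℂ` tends to `0` at `0⁺`
    (f : ℝ → ℂ) (hf : Tendsto f (𝓝[>] 0) (𝓝 0))
    -- the limit `T₀ = lim_{ε↓0} f(ε) C_p G^{ω,λ}_{p,p,p}(E ± iε) C_p` exists,
    -- where `G^{ω,λ}_{p,p,p}(z) = P_p (A^ω + λ C_p - z)⁻¹ P_p`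
    (T₀ : H →L[ℂ] H)
    (hT₀ : Tendsto (fun ε : ℝ =>
        f ε • ((C p) ∘L
          ((P p) ∘L Ring.inverse ((T + lam • C p)
              - ((E : ℂ) + (s * ε) • Complex.I) • (1 : H →L[ℂ] H)) ∘L (P p))
          ∘L (C p)))
      (𝓝[>] 0) (𝓝 T₀)) :
    (∀ y : H, (Cinv + lam • L) (T₀ y) = 0) ∧
    (∀ φ ∈ LinearMap.range ((P p : H →ₗ[ℂ] H)),
      (Cinv + lam • L) φ = 0 → imPart L φ = 0) := by
  have hsne : s ≠ 0 := by rcases hs with h | h <;> (rw [h]; norm_num)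
  have hs2 : s * s = 1 := by rcases hs with h | h <;> (rw [h]; norm_num)
  have hCsa : IsSelfAdjoint (C p) := (hCpos p).isSelfAdjoint
  have hPC : (P p) ∘L (C p) = C p := stmt17_proj_comp (P p) (C p) (hPidem p) (hPrange p)
  have hCP : (C p) ∘L (P p) = C p := by
    have h := congrArg ContinuousLinearMap.adjoint hPC
    rw [ContinuousLinearMap.adjoint_comp,
      (ContinuousLinearMap.isSelfAdjoint_iff'.mp hCsa),
      (ContinuousLinearMap.isSelfAdjoint_iff'.mp (hPsa p))] at h
    exact h
  have hTl : IsSelfAdjoint (T + lam • C p) := by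
    rw [stmt17_real_smul]
    exact hT.add (by rw [IsSelfAdjoint, star_smul, hCsa.star_eq]; norm_num)
  have hzim : ∀ ε : ℝ, ((E : ℂ) + (s * ε) • Complex.I).im = s * ε := by intro ε; simp
  have hzne : ∀ ε ∈ Set.Ioi (0:ℝ), ((E : ℂ) + (s * ε) • Complex.I).im ≠ 0 := by
    intro ε hε
    rw [hzim]
    exact mul_ne_zero hsne (ne_of_gt hε)
  -- Part 1
  have key : ∀ ε ∈ Set.Ioi (0:ℝ),
      (Cinv + lam • ((P p) ∘L Ring.inverse (T - ((E : ℂ) + (s * ε) • Complex.I) •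
          (1 : H →L[ℂ] H)) ∘L (P p))) *
        (f ε • ((C p) ∘L
          ((P p) ∘L Ring.inverse ((T + lam • C p)
              - ((E : ℂ) + (s * ε) • Complex.I) • (1 : H →L[ℂ] H)) ∘L (P p))
          ∘L (C p)))
      = f ε • (((P p) ∘L Ring.inverse (T - ((E : ℂ) + (s * ε) • Complex.I) •
          (1 : H →L[ℂ] H)) ∘L (P p)) * (C p)) := by
    intro ε hε
    rw [mul_smul_comm]
    congr 1
    have hu1 : IsUnit (T - ((E : ℂ) + (s * ε) • Complex.I) • (1 : H →L[ℂ] H)) :=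
      stmt17_isUnit T hT _ (hzne ε hε)
    have hu2 : IsUnit ((T + lam • C p) - ((E : ℂ) + (s * ε) • Complex.I) • (1 : H →L[ℂ] H)) :=
      stmt17_isUnit _ hTl _ (hzne ε hε)
    have hres : Ring.inverse (T - ((E : ℂ) + (s * ε) • Complex.I) • (1 : H →L[ℂ] H))
          - Ring.inverse ((T + lam • C p) - ((E : ℂ) + (s * ε) • Complex.I) • (1 : H →L[ℂ] H))
        = Ring.inverse (T - ((E : ℂ) + (s * ε) • Complex.I) • (1 : H →L[ℂ] H)) * (lam • C p) *
          Ring.inverse ((T + lam • C p) - ((E : ℂ) + (s * ε) • Complex.I) • (1 : H →L[ℂ] H)) := by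
      rw [stmt17_resolvent hu1 hu2]
      congr 2
      abel
    exact stmt17_core (P p) (C p) Cinv _ _ lam hPC hCP hCinv₁ hres
  have hGtend : Tendsto (fun ε : ℝ => Cinv + lam • ((P p) ∘L
      Ring.inverse (T - ((E : ℂ) + (s * ε) • Complex.I) • (1 : H →L[ℂ] H)) ∘L (P p)))
      (𝓝[>] 0) (𝓝 (Cinv + lam • L)) :=
    tendsto_const_nhds.add (hL.const_smul lam)
  have hmul := hGtend.mul hT₀
  have hRHS : Tendsto (fun ε : ℝ => f ε • (((P p) ∘L
      Ring.inverse (T - ((E : ℂ) + (s * ε) • Complex.I) • (1 : H →L[ℂ] H)) ∘L (P p)) * (C p)))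
      (𝓝[>] 0) (𝓝 ((0:ℂ) • (L * (C p)))) :=
    hf.smul (hL.mul tendsto_const_nhds)
  rw [zero_smul] at hRHS
  have hee := Filter.eventuallyEq_of_mem (self_mem_nhdsWithin (s := Set.Ioi (0:ℝ)) (a := 0)) key
  have hzero : (Cinv + lam • L) * T₀ = 0 := tendsto_nhds_unique (hmul.congr' hee) hRHS
  constructor
  · intro y
    have := congrArg (fun A : H →L[ℂ] H => A y) (hzero)
    simpa [ContinuousLinearMap.mul_apply] using this
  · intro φ hφ h0
    obtain ⟨y, hy⟩ := hφ
    have hy' : (P p) y = φ := hy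
    have hPφ : (P p) φ = φ := by
      have h1 : (P p) ((P p) y) = (P p) y := by
        have := congrArg (fun A : H →L[ℂ] H => A y) (hPidem p); simpa using this
      rw [← hy']; exact h1
    have hCpCi : (C p) (Cinv φ) = φ := by
      have h2 := congrArg (fun A : H →L[ℂ] H => A φ) hCinv₂
      simpa [hPφ] using h2
    by_cases hlam : lam = 0
    · have hCiφ : Cinv φ = 0 := by
        have h3 := h0
        rw [hlam] at h3
        simpa using h3
      have hφ0 : φ = 0 := by rw [← hCpCi, hCiφ, map_zero]
      rw [hφ0, map_zero]
    · set S := s • imPart L with hS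
      have hSsa : IsSelfAdjoint S := by
        rw [hS, stmt17_real_smul, IsSelfAdjoint, star_smul,
          (stmt17_imPart_isSelfAdjoint L).star_eq]
        norm_num
      have hre : ∀ x : H, (⟪x, S x⟫_ℂ).re = s * (⟪x, L x⟫_ℂ).im := by
        intro x
        rw [hS, ContinuousLinearMap.smul_apply, stmt17_real_smul_vec, inner_smul_right,
          stmt17_inner_imPart]
        simp [Complex.mul_re, Complex.ofReal_re, Complex.ofReal_im]
      have hSpos : ∀ x : H, 0 ≤ (⟪x, S x⟫_ℂ).re := by
        intro x
        rw [hre]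
        have h1 : Tendsto (fun ε : ℝ => ((P p) ∘L
            Ring.inverse (T - ((E : ℂ) + (s * ε) • Complex.I) • (1 : H →L[ℂ] H)) ∘L (P p)) x)
            (𝓝[>] 0) (𝓝 (L x)) :=
          ((ContinuousLinearMap.apply ℂ H x).continuous.tendsto L).comp hL
        have h2 : Tendsto (fun ε : ℝ => ⟪x, ((P p) ∘L
            Ring.inverse (T - ((E : ℂ) + (s * ε) • Complex.I) • (1 : H →L[ℂ] H)) ∘L (P p)) x⟫_ℂ)
            (𝓝[>] 0) (𝓝 ⟪x, L x⟫_ℂ) := tendsto_const_nhds.inner h1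
        have h3 : Tendsto (fun ε : ℝ => s * (⟪x, ((P p) ∘L
            Ring.inverse (T - ((E : ℂ) + (s * ε) • Complex.I) • (1 : H →L[ℂ] H)) ∘L (P p)) x⟫_ℂ).im)
            (𝓝[>] 0) (𝓝 (s * (⟪x, L x⟫_ℂ).im)) :=
          ((Complex.continuous_im.tendsto _).comp h2).const_mul s
        refine ge_of_tendsto h3 ?_
        refine Filter.eventually_iff_exists_mem.mpr ⟨Set.Ioi 0, self_mem_nhdsWithin, ?_⟩
        intro ε hε
        have hGx : ((P p) ∘L Ring.inverse (T - ((E : ℂ) + (s * ε) • Complex.I) •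
            (1 : H →L[ℂ] H)) ∘L (P p)) x
            = (P p) (Ring.inverse (T - ((E : ℂ) + (s * ε) • Complex.I) • (1 : H →L[ℂ] H))
              ((P p) x)) := rfl
        have hPsym : ∀ w : H, ⟪x, (P p) w⟫_ℂ = ⟪(P p) x, w⟫_ℂ := fun w =>
          (((ContinuousLinearMap.isSelfAdjoint_iff_isSymmetric).mp (hPsa p)) x w).symm
        rw [hGx, hPsym, stmt17_im_inner T hT _ (hzne ε hε), hzim]
        have hcalc : s * (s * ε * ‖Ring.inverse (T - ((E : ℂ) + (s * ε) • Complex.I) •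
            (1 : H →L[ℂ] H)) ((P p) x)‖ ^ 2)
            = (s * s) * (ε * ‖Ring.inverse (T - ((E : ℂ) + (s * ε) • Complex.I) •
            (1 : H →L[ℂ] H)) ((P p) x)‖ ^ 2) := by ring
        rw [hcalc, hs2, one_mul]
        have hε' : (0:ℝ) < ε := hε
        positivity
      have hCireal : (⟪φ, Cinv φ⟫_ℂ).im = 0 := by
        set w := Cinv φ with hw
        have heq1 : ⟪φ, w⟫_ℂ = ⟪(C p) w, w⟫_ℂ := by rw [hCpCi]
        have hsymC : ⟪(C p) w, w⟫_ℂ = ⟪w, (C p) w⟫_ℂ :=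
          ((ContinuousLinearMap.isSelfAdjoint_iff_isSymmetric).mp hCsa) w w
        have hconj : (starRingEnd ℂ) ⟪φ, w⟫_ℂ = ⟪φ, w⟫_ℂ := by
          rw [heq1, inner_conj_symm, ← hsymC]
        exact Complex.conj_eq_iff_im.mp hconj
      have hLφ : lam • (L φ) = -(Cinv φ) := by
        have h3 := h0
        rw [ContinuousLinearMap.add_apply, ContinuousLinearMap.smul_apply] at h3
        exact eq_neg_of_add_eq_zero_right h3
      have him0 : (⟪φ, L φ⟫_ℂ).im = 0 := by
        have h4 : L φ = -(lam⁻¹ • (Cinv φ)) := by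
          rw [← inv_smul_smul₀ hlam (L φ), hLφ, smul_neg]
        rw [h4, inner_neg_right, stmt17_real_smul_vec, inner_smul_right]
        simp [Complex.mul_im, Complex.ofReal_re, Complex.ofReal_im, hCireal]
      have h0' : (⟪φ, S φ⟫_ℂ).re = 0 := by rw [hre, him0, mul_zero]
      have hSφ : S φ = 0 := stmt17_pos_inner_zero hSsa hSpos h0'
      have h5 : s • (imPart L φ) = 0 := by
        rw [← ContinuousLinearMap.smul_apply, ← hS]; exact hSφ
      rcases smul_eq_zero.mp h5 with h | h
      · exact absurd h hsne
      · exact h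

end
end
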